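/- Let δ > 0 and define the weighted denominator D_δ(P,Q) := Σ_{i=1}^m √(μ_i²σ_i² + δ) · (Σ_{j=1}^{d_x} P(j,i)² + Σ_{j=1}^{d_y} Q(j,i)²). With N(P,Q) defined in the context, it holds that N(P,Q) ≤ max{ max_{i,j ∈ {1,…,m}, i ≠ j} (μ_i + μ_j)(σ_i + σ_j)/(√(μ_i²σ_i² + δ) + √(μ_j²σ_j² + δ)), max_{i ∈ {1,…,m}} μ_i(σ_i + σ_{m+1})/√(μ_i²σ_i² + δ) } · D_δ(P,Q). -/

import Mathlib

/-- The quantity `N(P,Q)` from the Rayleigh-quotient computation for CCA: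
`N(P,Q) = Σ_{i=1}^m μ_i ( σ_i (Σ_{j=1}^{d_x} P(j,i)² + Σ_{j=1}^{d_y} Q(j,i)²)
  − 2 Σ_{j=1}^{r} σ_j P(j,i) Q(j,i) )`. -/
noncomputable def Nval (m r dx dy : ℕ) (μ σ : ℕ → ℝ) (P Q : ℕ → ℕ → ℝ) : ℝ :=
  ∑ i ∈ Finset.Icc 1 m, μ i *
    (σ i * ((∑ j ∈ Finset.Icc 1 dx, (P j i) ^ 2) + (∑ j ∈ Finset.Icc 1 dy, (Q j i) ^ 2))
      - 2 * ∑ j ∈ Finset.Icc 1 r, σ j * P j i * Q j i)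

/-- The weighted denominator
`D_δ(P,Q) := Σ_{i=1}^m √(μ_i²σ_i² + δ) (Σ_{j=1}^{d_x} P(j,i)² + Σ_{j=1}^{d_y} Q(j,i)²)`. -/
noncomputable def Dval (m dx dy : ℕ) (μ σ : ℕ → ℝ) (δ : ℝ) (P Q : ℕ → ℕ → ℝ) : ℝ :=
  ∑ i ∈ Finset.Icc 1 m, Real.sqrt ((μ i) ^ 2 * (σ i) ^ 2 + δ) *
    ((∑ j ∈ Finset.Icc 1 dx, (P j i) ^ 2) + (∑ j ∈ Finset.Icc 1 dy, (Q j i) ^ 2))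

/-- Upper Rayleigh-quotient bound for CCA under the new left-and-right
preconditioned metric (Proposition 4.4). -/
theorem stmt6 (m r dx dy : ℕ) (hm : 2 ≤ m) (hr : m + 1 ≤ r) (hdx : r ≤ dx) (hdy : r ≤ dy)
    (μ σ : ℕ → ℝ)
    (hμ : ∀ i, 1 ≤ i → i < m → μ (i + 1) < μ i) (hμpos : 0 < μ m)
    (hσ : ∀ i, 1 ≤ i → i ≤ m → σ (i + 1) < σ i)
    (hσmono : ∀ i, m + 1 ≤ i → i < r → σ (i + 1) ≤ σ i)
    (hσnn : 0 ≤ σ r)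
    (δ : ℝ) (hδ : 0 < δ)
    (P Q : ℕ → ℕ → ℝ)
    (hP : ∀ i ∈ Finset.Icc 1 m, ∀ j ∈ Finset.Icc 1 m, P i j = -P j i)
    (hQ : ∀ i ∈ Finset.Icc 1 m, ∀ j ∈ Finset.Icc 1 m, Q i j = -Q j i) :
    Nval m r dx dy μ σ P Q ≤
      max
          (sSup {x : ℝ | ∃ i ∈ Finset.Icc 1 m, ∃ j ∈ Finset.Icc 1 m, i ≠ j ∧
            x = (μ i + μ j) * (σ i + σ j) /
              (Real.sqrt ((μ i) ^ 2 * (σ i) ^ 2 + δ) + Real.sqrt ((μ j) ^ 2 * (σ j) ^ 2 + δ))})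
          (sSup {x : ℝ | ∃ i ∈ Finset.Icc 1 m,
            x = μ i * (σ i + σ (m + 1)) / Real.sqrt ((μ i) ^ 2 * (σ i) ^ 2 + δ)}) *
        Dval m dx dy μ σ δ P Q := by
  classical
  set I : Finset ℕ := Finset.Icc 1 m with hI
  set w : ℕ → ℝ := fun i => Real.sqrt (μ i ^ 2 * σ i ^ 2 + δ) with hwdef
  have hwpos : ∀ i, 0 < w i := fun i => Real.sqrt_pos.mpr (by positivity)
  set S1 : Set ℝ := {x : ℝ | ∃ i ∈ Finset.Icc 1 m, ∃ j ∈ Finset.Icc 1 m, i ≠ j ∧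
            x = (μ i + μ j) * (σ i + σ j) /
              (Real.sqrt ((μ i) ^ 2 * (σ i) ^ 2 + δ) + Real.sqrt ((μ j) ^ 2 * (σ j) ^ 2 + δ))}
    with hS1
  set S2 : Set ℝ := {x : ℝ | ∃ i ∈ Finset.Icc 1 m,
            x = μ i * (σ i + σ (m + 1)) / Real.sqrt ((μ i) ^ 2 * (σ i) ^ 2 + δ)} with hS2
  set C : ℝ := max (sSup S1) (sSup S2) with hC
  -- monotonicity / positivity facts
  have hμanti : ∀ a b : ℕ, 1 ≤ a → a ≤ b → b ≤ m → μ b ≤ μ a := by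
    intro a b h1 hab hbm
    induction b with
    | zero => omega
    | succ n ih =>
      rcases Nat.lt_or_ge a (n+1) with h | h
      · exact (hμ n (by omega) (by omega)).le.trans (ih (by omega) (by omega))
      · have : a = n+1 := by omega
        simp [this]
  have hμpos' : ∀ i, 1 ≤ i → i ≤ m → 0 < μ i := fun i h1 h2 =>
    lt_of_lt_of_le hμpos (hμanti i m h1 h2 le_rfl)
  have hσanti : ∀ a b : ℕ, 1 ≤ a → a ≤ b → b ≤ r → σ b ≤ σ a := by
    intro a b h1 hab hbr
    induction b with
    | zero => omega
    | succ n ih =>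
      rcases Nat.lt_or_ge a (n+1) with h | h
      · have hstep : σ (n+1) ≤ σ n := by
          rcases Nat.lt_or_ge n (m+1) with hn | hn
          · exact (hσ n (by omega) (by omega)).le
          · exact hσmono n (by omega) (by omega)
        exact hstep.trans (ih (by omega) (by omega))
      · have : a = n+1 := by omega
        simp [this]
  have hσnn' : ∀ j, 1 ≤ j → j ≤ r → 0 ≤ σ j := fun j h1 h2 =>
    le_trans hσnn (hσanti j r h1 h2 le_rfl)
  have hσm1nn : 0 ≤ σ (m+1) := hσnn' (m+1) (by omega) hr
  -- boundedness of the candidate sets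
  have hBdd1 : BddAbove S1 := by
    apply Set.Finite.bddAbove
    apply Set.Finite.subset (Set.Finite.image
      (fun p : ℕ × ℕ => (μ p.1 + μ p.2) * (σ p.1 + σ p.2) /
        (Real.sqrt ((μ p.1) ^ 2 * (σ p.1) ^ 2 + δ) + Real.sqrt ((μ p.2) ^ 2 * (σ p.2) ^ 2 + δ)))
      ((Finset.Icc 1 m ×ˢ Finset.Icc 1 m : Finset (ℕ × ℕ)).finite_toSet))
    rintro x ⟨i, hi, j, hj, hij, rfl⟩
    exact ⟨(i, j), Finset.mem_coe.mpr (Finset.mem_product.mpr ⟨hi, hj⟩), rfl⟩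
  have hBdd2 : BddAbove S2 := by
    apply Set.Finite.bddAbove
    apply Set.Finite.subset (Set.Finite.image
      (fun i : ℕ => μ i * (σ i + σ (m + 1)) / Real.sqrt ((μ i) ^ 2 * (σ i) ^ 2 + δ))
      (Finset.Icc 1 m).finite_toSet)
    rintro x ⟨i, hi, rfl⟩
    exact ⟨i, hi, rfl⟩
  -- the key bounds coming from the constant C
  have hC1 : ∀ i ∈ I, ∀ j ∈ I, i ≠ j → (μ i + μ j) * (σ i + σ j) ≤ C * (w i + w j) := by
    intro i hi j hj hij
    have hmem : (μ i + μ j) * (σ i + σ j) / (w i + w j) ∈ S1 := ⟨i, hi, j, hj, hij, rfl⟩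
    have h1 : (μ i + μ j) * (σ i + σ j) / (w i + w j) ≤ C :=
      (le_csSup hBdd1 hmem).trans (le_max_left _ _)
    have hpos : 0 < w i + w j := by have := hwpos i; have := hwpos j; linarith
    calc (μ i + μ j) * (σ i + σ j)
        = (μ i + μ j) * (σ i + σ j) / (w i + w j) * (w i + w j) := by field_simp
      _ ≤ C * (w i + w j) := mul_le_mul_of_nonneg_right h1 hpos.le
  have hC2 : ∀ i ∈ I, μ i * (σ i + σ (m+1)) ≤ C * w i := by
    intro i hi
    have hmem : μ i * (σ i + σ (m+1)) / w i ∈ S2 := ⟨i, hi, rfl⟩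
    have h1 : μ i * (σ i + σ (m+1)) / w i ≤ C :=
      (le_csSup hBdd2 hmem).trans (le_max_right _ _)
    have hpos : 0 < w i := hwpos i
    calc μ i * (σ i + σ (m+1))
        = μ i * (σ i + σ (m+1)) / w i * w i := by field_simp
      _ ≤ C * w i := mul_le_mul_of_nonneg_right h1 hpos.le
  -- splitting sums
  have hsplit : ∀ (n : ℕ), m ≤ n → ∀ f : ℕ → ℝ,
      (∑ j ∈ Finset.Icc 1 m, f j) + (∑ j ∈ Finset.Icc (m+1) n, f j)
        = ∑ j ∈ Finset.Icc 1 n, f j := by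
    intro n hn f
    rw [show (1:ℕ) = 0 + 1 from rfl, Finset.Icc_add_one_left_eq_Ioc, zero_add,
      Finset.Icc_add_one_left_eq_Ioc]
    exact Finset.sum_Ioc_consecutive f (by omega) (by omega)
  have hmemI : ∀ i ∈ I, 1 ≤ i ∧ i ≤ m := by
    intro i hi; rw [hI, Finset.mem_Icc] at hi; exact hi
  have hPdiag : ∀ i ∈ I, P i i = 0 := by
    intro i hi; have := hP i hi i hi; linarith
  have hQdiag : ∀ i ∈ I, Q i i = 0 := by
    intro i hi; have := hQ i hi i hi; linarith
  have htsymm : ∀ i ∈ I, ∀ j ∈ I, P i j ^ 2 + Q i j ^ 2 = P j i ^ 2 + Q j i ^ 2 := by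
    intro i hi j hj; rw [hP i hi j hj, hQ i hi j hj]; ring
  have hPQsymm : ∀ i ∈ I, ∀ j ∈ I, P i j * Q i j = P j i * Q j i := by
    intro i hi j hj; rw [hP i hi j hj, hQ i hi j hj]; ring
  -- column tail pieces
  set tP : ℕ → ℝ := fun i => ∑ j ∈ Finset.Icc (m+1) dx, P j i ^ 2 with htP
  set tQ : ℕ → ℝ := fun i => ∑ j ∈ Finset.Icc (m+1) dy, Q j i ^ 2 with htQ
  have htPnn : ∀ i, 0 ≤ tP i := fun i => Finset.sum_nonneg fun j _ => sq_nonneg _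
  have htQnn : ∀ i, 0 ≤ tQ i := fun i => Finset.sum_nonneg fun j _ => sq_nonneg _
  ----------------------------------------------------------------
  -- Step 1 : N ≤ B1 + B2
  ----------------------------------------------------------------
  have step1 : Nval m r dx dy μ σ P Q ≤
      (∑ i ∈ I, ∑ j ∈ I,
        (μ i * σ i + (μ i * σ j + μ j * σ i) / 2) * (P j i ^ 2 + Q j i ^ 2))
      + ∑ i ∈ I, (μ i * (σ i + σ (m+1))) * (tP i + tQ i) := by
    -- exact decomposition of N
    have hN : Nval m r dx dy μ σ P Q =
        (∑ i ∈ I, ∑ j ∈ I, (μ i * σ i) * (P j i ^ 2 + Q j i ^ 2))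
        + (∑ i ∈ I, (μ i * σ i) * (tP i + tQ i))
        + (∑ i ∈ I, ∑ j ∈ I, (-2 * (μ i * σ j)) * (P j i * Q j i))
        + (∑ i ∈ I, ∑ j ∈ Finset.Icc (m+1) r, (-2 * (μ i * σ j)) * (P j i * Q j i)) := by
      rw [Nval]
      rw [← Finset.sum_add_distrib, ← Finset.sum_add_distrib, ← Finset.sum_add_distrib]
      apply Finset.sum_congr rfl
      intro i hi
      rw [← hsplit dx (by omega) (fun j => P j i ^ 2),
        ← hsplit dy (by omega) (fun j => Q j i ^ 2),
        ← hsplit r (by omega) (fun j => σ j * P j i * Q j i)]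
      have c1 : ∑ j ∈ I, (μ i * σ i) * (P j i ^ 2 + Q j i ^ 2)
          = μ i * σ i * ((∑ j ∈ I, P j i ^ 2) + ∑ j ∈ I, Q j i ^ 2) := by
        rw [← Finset.sum_add_distrib, Finset.mul_sum]
      have c2 : ∀ s : Finset ℕ, ∑ j ∈ s, (-2 * (μ i * σ j)) * (P j i * Q j i)
          = (-2 * μ i) * ∑ j ∈ s, σ j * P j i * Q j i := by
        intro s; rw [Finset.mul_sum]; exact Finset.sum_congr rfl fun j _ => by ring
      rw [c1, c2 I, c2 (Finset.Icc (m+1) r)]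
      simp only [htP, htQ]
      ring
    rw [hN]
    -- bound the two cross terms
    have hswap : ∑ i ∈ I, ∑ j ∈ I, (μ i * σ j) * (P j i * Q j i)
        = ∑ i ∈ I, ∑ j ∈ I, (μ j * σ i) * (P j i * Q j i) := by
      rw [Finset.sum_comm]
      refine Finset.sum_congr rfl fun i hi => Finset.sum_congr rfl fun j hj => ?_
      rw [hPQsymm i hi j hj]
    have hT3eq : (∑ i ∈ I, ∑ j ∈ I, (-2 * (μ i * σ j)) * (P j i * Q j i))
        = ∑ i ∈ I, ∑ j ∈ I, (-(μ i * σ j + μ j * σ i)) * (P j i * Q j i) := by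
      have e : ∀ i j : ℕ, (-2 * (μ i * σ j)) * (P j i * Q j i)
          = (-(μ i * σ j + μ j * σ i)) * (P j i * Q j i)
            + ((μ j * σ i) * (P j i * Q j i) - (μ i * σ j) * (P j i * Q j i)) := by
        intro i j; ring
      simp only [e, Finset.sum_add_distrib, Finset.sum_sub_distrib]
      rw [hswap]
      ring
    have hT3le : (∑ i ∈ I, ∑ j ∈ I, (-2 * (μ i * σ j)) * (P j i * Q j i))
        ≤ ∑ i ∈ I, ∑ j ∈ I, ((μ i * σ j + μ j * σ i) / 2) * (P j i ^ 2 + Q j i ^ 2) := by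
      rw [hT3eq]
      apply Finset.sum_le_sum
      intro i hi
      apply Finset.sum_le_sum
      intro j hj
      obtain ⟨hi1, hi2⟩ := hmemI i hi
      obtain ⟨hj1, hj2⟩ := hmemI j hj
      have hμi := hμpos' i hi1 hi2
      have hμj := hμpos' j hj1 hj2
      have hσi := hσnn' i hi1 (by omega)
      have hσj := hσnn' j hj1 (by omega)
      have hc : 0 ≤ μ i * σ j + μ j * σ i := by positivity
      nlinarith [mul_nonneg hc (sq_nonneg (P j i + Q j i))]
    have hT4le : (∑ i ∈ I, ∑ j ∈ Finset.Icc (m+1) r, (-2 * (μ i * σ j)) * (P j i * Q j i))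
        ≤ ∑ i ∈ I, (μ i * σ (m+1)) * (tP i + tQ i) := by
      apply Finset.sum_le_sum
      intro i hi
      have hμi := (hμpos' i (hmemI i hi).1 (hmemI i hi).2).le
      calc ∑ j ∈ Finset.Icc (m+1) r, (-2 * (μ i * σ j)) * (P j i * Q j i)
          ≤ ∑ j ∈ Finset.Icc (m+1) r, (μ i * σ (m+1)) * (P j i ^ 2 + Q j i ^ 2) := by
            apply Finset.sum_le_sum
            intro j hj
            rw [Finset.mem_Icc] at hj
            have hσj : 0 ≤ σ j := hσnn' j (by omega) hj.2
            have hσj' : σ j ≤ σ (m+1) := hσanti (m+1) j (by omega) hj.1 hj.2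
            nlinarith [mul_nonneg (mul_nonneg hμi hσj) (sq_nonneg (P j i + Q j i)),
              mul_nonneg (mul_nonneg hμi (sub_nonneg.mpr hσj'))
                (add_nonneg (sq_nonneg (P j i)) (sq_nonneg (Q j i)))]
        _ = (μ i * σ (m+1)) * ((∑ j ∈ Finset.Icc (m+1) r, P j i ^ 2)
              + ∑ j ∈ Finset.Icc (m+1) r, Q j i ^ 2) := by
            rw [← Finset.sum_add_distrib, Finset.mul_sum]
        _ ≤ (μ i * σ (m+1)) * (tP i + tQ i) := by
            apply mul_le_mul_of_nonneg_left _ (by positivity)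
            have h1 : (∑ j ∈ Finset.Icc (m+1) r, P j i ^ 2) ≤ tP i := by
              apply Finset.sum_le_sum_of_subset_of_nonneg
              · exact Finset.Icc_subset_Icc_right hdx
              · intro j _ _; exact sq_nonneg _
            have h2 : (∑ j ∈ Finset.Icc (m+1) r, Q j i ^ 2) ≤ tQ i := by
              apply Finset.sum_le_sum_of_subset_of_nonneg
              · exact Finset.Icc_subset_Icc_right hdy
              · intro j _ _; exact sq_nonneg _
            linarith
    have hB1 : (∑ i ∈ I, ∑ j ∈ I, (μ i * σ i) * (P j i ^ 2 + Q j i ^ 2))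
        + (∑ i ∈ I, ∑ j ∈ I, ((μ i * σ j + μ j * σ i) / 2) * (P j i ^ 2 + Q j i ^ 2))
        = ∑ i ∈ I, ∑ j ∈ I,
          (μ i * σ i + (μ i * σ j + μ j * σ i) / 2) * (P j i ^ 2 + Q j i ^ 2) := by
      rw [← Finset.sum_add_distrib]
      refine Finset.sum_congr rfl fun i _ => ?_
      rw [← Finset.sum_add_distrib]
      exact Finset.sum_congr rfl fun j _ => by ring
    have hB2 : (∑ i ∈ I, (μ i * σ i) * (tP i + tQ i))
        + (∑ i ∈ I, (μ i * σ (m+1)) * (tP i + tQ i))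
        = ∑ i ∈ I, (μ i * (σ i + σ (m+1))) * (tP i + tQ i) := by
      rw [← Finset.sum_add_distrib]
      exact Finset.sum_congr rfl fun i _ => by ring
    linarith
  ----------------------------------------------------------------
  -- Step 2 : B1 ≤ ∑∑ (C * w i) * t
  ----------------------------------------------------------------
  have hsymsum : ∀ f : ℕ → ℕ → ℝ,
      (∑ i ∈ I, ∑ j ∈ I, f i j * (P j i ^ 2 + Q j i ^ 2))
        = ∑ i ∈ I, ∑ j ∈ I, f j i * (P j i ^ 2 + Q j i ^ 2) := by
    intro f
    rw [Finset.sum_comm]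
    refine Finset.sum_congr rfl fun i hi => Finset.sum_congr rfl fun j hj => ?_
    rw [htsymm i hi j hj]
  have step2 : (∑ i ∈ I, ∑ j ∈ I,
        (μ i * σ i + (μ i * σ j + μ j * σ i) / 2) * (P j i ^ 2 + Q j i ^ 2))
      ≤ ∑ i ∈ I, ∑ j ∈ I, (C * w i) * (P j i ^ 2 + Q j i ^ 2) := by
    have key : (∑ i ∈ I, ∑ j ∈ I,
          (μ i * σ i + (μ i * σ j + μ j * σ i) / 2) * (P j i ^ 2 + Q j i ^ 2))
        + (∑ i ∈ I, ∑ j ∈ I,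
          (μ j * σ j + (μ j * σ i + μ i * σ j) / 2) * (P j i ^ 2 + Q j i ^ 2))
        ≤ (∑ i ∈ I, ∑ j ∈ I, (C * w i) * (P j i ^ 2 + Q j i ^ 2))
          + (∑ i ∈ I, ∑ j ∈ I, (C * w j) * (P j i ^ 2 + Q j i ^ 2)) := by
      rw [← Finset.sum_add_distrib, ← Finset.sum_add_distrib]
      apply Finset.sum_le_sum
      intro i hi
      rw [← Finset.sum_add_distrib, ← Finset.sum_add_distrib]
      apply Finset.sum_le_sum
      intro j hj
      rcases eq_or_ne i j with rfl | hij
      · rw [hPdiag i hi, hQdiag i hi]; norm_num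
      · have h1 : (μ i + μ j) * (σ i + σ j) ≤ C * (w i + w j) := hC1 i hi j hj hij
        have h2 : 0 ≤ P j i ^ 2 + Q j i ^ 2 :=
          add_nonneg (sq_nonneg _) (sq_nonneg _)
        nlinarith [mul_le_mul_of_nonneg_right h1 h2]
    have e1 := hsymsum (fun i j => μ i * σ i + (μ i * σ j + μ j * σ i) / 2)
    have e2 := hsymsum (fun i j => C * w i)
    linarith
  ----------------------------------------------------------------
  -- Step 3 : B2 ≤ ∑ (C * w i) * tail
  ----------------------------------------------------------------
  have step3 : (∑ i ∈ I, (μ i * (σ i + σ (m+1))) * (tP i + tQ i))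
      ≤ ∑ i ∈ I, (C * w i) * (tP i + tQ i) := by
    apply Finset.sum_le_sum
    intro i hi
    have := hC2 i hi
    have hnn : 0 ≤ tP i + tQ i := add_nonneg (htPnn i) (htQnn i)
    exact mul_le_mul_of_nonneg_right this hnn
  ----------------------------------------------------------------
  -- Step 4 : reassemble into C * Dval
  ----------------------------------------------------------------
  have step4 : (∑ i ∈ I, ∑ j ∈ I, (C * w i) * (P j i ^ 2 + Q j i ^ 2))
      + (∑ i ∈ I, (C * w i) * (tP i + tQ i))
      = C * Dval m dx dy μ σ δ P Q := by
    rw [Dval, Finset.mul_sum, ← Finset.sum_add_distrib]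
    apply Finset.sum_congr rfl
    intro i hi
    have c1 : ∑ j ∈ I, (C * w i) * (P j i ^ 2 + Q j i ^ 2)
        = (C * w i) * ((∑ j ∈ I, P j i ^ 2) + ∑ j ∈ I, Q j i ^ 2) := by
      rw [← Finset.sum_add_distrib, Finset.mul_sum]
    rw [c1, ← hsplit dx (by omega) (fun j => P j i ^ 2),
      ← hsplit dy (by omega) (fun j => Q j i ^ 2)]
    simp only [htP, htQ, hwdef]
    ring
  linarith
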